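/- arXiv:2002.00403 — 2 statements merged into one kernel-verified Lean document; each statement's English description precedes it below -/
import Mathlib

section
/- Fix a number k of devices to schedule and a success probability p ∈ [0,1]. Among all subsets A of {1,…,K} with |A| = k, the expected next-slot average age E[(1/K) Σ_i δ'_i] = (1/K)(Σ_{i=1}^{K} δ_i + K − p Σ_{i∈A} δ_i) is minimized by choosing A to consist of the k devices with the largest current ages. Hence the optimal scheduling policy need only be searched over the K+1 actions 'schedule the top-k ages, k = 0, 1, …, K', reducing the action space from 2^K to K+1. -/
open Finset

/-- Action elimination: with ages sorted in descending order, success probability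
`p ∈ [0,1]`, and `k` devices to schedule, the expected next-slot average age
`(1/K)(Σ_i δ_i + K − p Σ_{i∈A} δ_i)` is minimized over all subsets `A` of
cardinality `k` by scheduling the `k` devices with the largest current ages. -/
theorem topk_minimizes_expected_age {K : ℕ} (δ : Fin K → ℝ)
    (hsort : Antitone δ) (hnonneg : ∀ i, 0 ≤ δ i)
    (p : ℝ) (hp0 : 0 ≤ p) (hp1 : p ≤ 1) (k : ℕ) (hkK : k ≤ K)
    (A : Finset (Fin K)) (hA : A.card = k) :
    (1 / (K : ℝ)) * (∑ i, δ i + (K : ℝ)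
        - p * ∑ i ∈ univ.filter (fun i : Fin K => (i : ℕ) < k), δ i)
      ≤ (1 / (K : ℝ)) * (∑ i, δ i + (K : ℝ) - p * ∑ i ∈ A, δ i) := by
  set T : Finset (Fin K) := univ.filter (fun i : Fin K => (i : ℕ) < k) with hT
  have hTcard : T.card = k := by
    have : T = Finset.map ⟨Fin.castLE hkK, Fin.castLE_injective hkK⟩ univ := by
      ext i
      simp only [hT, mem_filter, mem_univ, true_and, mem_map, Function.Embedding.coeFn_mk]
      constructor
      · intro hi; exact ⟨⟨i, hi⟩, rfl⟩
      · rintro ⟨j, -, rfl⟩; exact j.isLt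
    rw [this, card_map, card_univ, Fintype.card_fin]
  have hcard : (A \ T).card = (T \ A).card := by
    rw [card_sdiff_comm (by rw [hA, hTcard])]
  have hsum : ∑ i ∈ A, δ i ≤ ∑ i ∈ T, δ i := by
    have e := Finset.equivOfCardEq hcard
    have hstep : ∑ i ∈ A \ T, δ i ≤ ∑ i ∈ T \ A, δ i := by
      rw [← Finset.sum_coe_sort (A \ T) δ, ← Finset.sum_coe_sort (T \ A) δ,
        ← Equiv.sum_comp e (fun b : {x // x ∈ T \ A} => δ b)]
      refine Finset.sum_le_sum fun a _ => ?_
      apply hsort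
      have ha : ¬ ((a : Fin K) : ℕ) < k := by
        have := a.2; rw [mem_sdiff] at this; simpa [hT] using this.2
      have hb : ((e a : Fin K) : ℕ) < k := by
        have := (e a).2; rw [mem_sdiff] at this; simpa [hT] using this.1
      exact Fin.le_def.mpr (le_of_lt (lt_of_lt_of_le hb (le_of_not_gt ha)))
    calc ∑ i ∈ A, δ i = ∑ i ∈ A ∩ T, δ i + ∑ i ∈ A \ T, δ i := by
            rw [Finset.sum_inter_add_sum_sdiff]
      _ ≤ ∑ i ∈ A ∩ T, δ i + ∑ i ∈ T \ A, δ i := by linarith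
      _ = ∑ i ∈ T ∩ A, δ i + ∑ i ∈ T \ A, δ i := by rw [Finset.inter_comm]
      _ = ∑ i ∈ T, δ i := Finset.sum_inter_add_sum_sdiff ..
  have h1 : (0:ℝ) ≤ 1 / (K : ℝ) := by positivity
  apply mul_le_mul_of_nonneg_left _ h1
  have := mul_le_mul_of_nonneg_left hsum hp0
  linarith
end

section
/- Let δ₁, …, δ_K ≥ 1 be the current ages, let 1 ≤ k ≤ K, let p ∈ (0,1], and suppose the k devices with the largest ages are scheduled, each succeeding independently with probability p (next age 1 on success, δ_i + 1 otherwise). Then with ω(s) = (1/K) Σ_{i=1}^{K} δ_i and β = 1 − p·k/K, the expected next-state weight satisfies E[ω(s')] ≤ β · ω(s) + 1, and β < 1. -/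
open Finset MeasureTheory ProbabilityTheory

/-- Geometric drift: with ages `δ i ≥ 1` sorted in descending order, `1 ≤ k ≤ K`,
success probability `p ∈ (0,1]`, scheduling the `k` devices with the largest
ages (independent successes; next age `1` on success, `δ i + 1` otherwise), the
expected next-state weight `ω(s) = (1/K) Σ_i δ_i` satisfies
`E[ω(s')] ≤ β ω(s) + 1` with `β = 1 − p k / K < 1`. -/
theorem geometric_drift_topk {K : ℕ} (δ : Fin K → ℝ)
    (hsort : Antitone δ) (hδ : ∀ i, 1 ≤ δ i)
    (k : ℕ) (hk : 1 ≤ k) (hkK : k ≤ K)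
    (p : ℝ) (hp0 : 0 < p) (hp1 : p ≤ 1)
    {Ω : Type*} [MeasurableSpace Ω] (μ : Measure Ω) [IsProbabilityMeasure μ]
    (J : Fin K → Ω → Bool) (hJmeas : ∀ i, Measurable (J i))
    (hJindep : iIndepFun J μ)
    (hJp : ∀ i, (μ {ω | J i ω = true}).toReal = p)
    (δ' : Fin K → Ω → ℝ)
    (hδ' : ∀ i ω, δ' i ω = if (i : ℕ) < k ∧ J i ω = true then 1 else δ i + 1) :
    ∫ ω, (1 / (K : ℝ)) * ∑ i, δ' i ω ∂μ
      ≤ (1 - p * (k : ℝ) / (K : ℝ)) * ((1 / (K : ℝ)) * ∑ i, δ i) + 1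
    ∧ 1 - p * (k : ℝ) / (K : ℝ) < 1 := by
  have hK : 0 < K := lt_of_lt_of_le hk hkK
  have hKR : (0:ℝ) < K := by exact_mod_cast hK
  have hkR : (0:ℝ) < k := by exact_mod_cast hk
  -- the set of scheduled-and-successful outcomes
  set A : Fin K → Set Ω := fun i => {ω | (i : ℕ) < k ∧ J i ω = true} with hA
  have hAmeas : ∀ i, MeasurableSet (A i) := by
    intro i
    by_cases h : (i:ℕ) < k
    · have : A i = J i ⁻¹' {true} := by ext ω; simp [hA, h]
      rw [this]; exact (hJmeas i) (measurableSet_singleton true)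
    · have : A i = ∅ := by ext ω; simp [hA, h]
      rw [this]; exact MeasurableSet.empty
  have hAmeasure : ∀ i, (μ (A i)).toReal = if (i:ℕ) < k then p else 0 := by
    intro i
    by_cases h : (i:ℕ) < k
    · have : A i = {ω | J i ω = true} := by ext ω; simp [hA, h]
      simp [this, h, hJp i]
    · have : A i = ∅ := by ext ω; simp [hA, h]
      simp [this, h]
  -- rewrite δ' i as indicator plus constant
  have hform : ∀ i, δ' i = fun ω => (A i).indicator (fun _ => (1:ℝ) - (δ i + 1)) ω + (δ i + 1) := by
    intro i
    funext ω
    rw [hδ' i ω]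
    by_cases h : (i:ℕ) < k ∧ J i ω = true
    · have : ω ∈ A i := h
      simp [h, Set.indicator_of_mem this]
    · have : ω ∉ A i := h
      simp [h, Set.indicator_of_notMem this]
  have hinteg : ∀ i, Integrable (δ' i) μ := by
    intro i
    rw [hform i]
    exact ((integrable_const _).indicator (hAmeas i)).add (integrable_const _)
  have hint : ∀ i, ∫ ω, δ' i ω ∂μ = δ i + 1 - δ i * (if (i:ℕ) < k then p else 0) := by
    intro i
    rw [hform i]
    rw [integral_add ((integrable_const _).indicator (hAmeas i)) (integrable_const _)]
    rw [integral_indicator_const _ (hAmeas i), integral_const]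
    rw [measureReal_def, measureReal_def, hAmeasure i]
    simp only [measure_univ, ENNReal.toReal_one, smul_eq_mul, one_mul]
    by_cases h : (i:ℕ) < k <;> simp [h] <;> ring
  -- the sum of integrals
  set S : Finset (Fin K) := Finset.univ.filter (fun i => (i:ℕ) < k) with hS
  have hsum : ∫ ω, ∑ i, δ' i ω ∂μ = (∑ i, (δ i + 1)) - p * ∑ i ∈ S, δ i := by
    rw [integral_finset_sum _ (fun i _ => hinteg i)]
    simp_rw [hint]
    rw [Finset.sum_sub_distrib]
    congr 1
    rw [Finset.mul_sum, hS, Finset.sum_filter]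
    congr 1
    funext i
    by_cases h : (i:ℕ) < k <;> simp [h] <;> ring
  -- card of S
  have hScard : S.card = k := by
    have : S = Finset.map (Fin.castLEEmb hkK) Finset.univ := by
      ext i
      simp [hS, Fin.castLEEmb]
      constructor
      · intro h; exact ⟨⟨i, h⟩, rfl⟩
      · rintro ⟨j, rfl⟩; exact j.isLt
    rw [this]; simp
  -- key rearrangement inequality
  have hkey : (k:ℝ) * ∑ i, δ i ≤ (K:ℝ) * ∑ i ∈ S, δ i := by
    set i₀ : Fin K := ⟨k - 1, by omega⟩ with hi₀
    have h1 : (k:ℝ) * δ i₀ ≤ ∑ i ∈ S, δ i := by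
      have : ∀ i ∈ S, δ i₀ ≤ δ i := by
        intro i hi
        apply hsort
        have hik : (i:ℕ) < k := by simpa [hS] using hi
        rw [Fin.le_def]
        simp only [hi₀]
        omega
      calc (k:ℝ) * δ i₀ = S.card • δ i₀ := by rw [hScard]; simp [nsmul_eq_mul]
        _ ≤ ∑ i ∈ S, δ i := Finset.card_nsmul_le_sum S δ (δ i₀) this
    have h2 : ∑ i ∈ Sᶜ, δ i ≤ ((K:ℝ) - k) * δ i₀ := by
      have hc : Sᶜ.card = K - k := by
        rw [Finset.card_compl, hScard]; simp
      have : ∀ i ∈ Sᶜ, δ i ≤ δ i₀ := by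
        intro i hi
        apply hsort
        have hik : ¬ ((i:ℕ) < k) := by simpa [hS] using hi
        rw [Fin.le_def]
        simp only [hi₀]
        omega
      calc ∑ i ∈ Sᶜ, δ i ≤ Sᶜ.card • δ i₀ := Finset.sum_le_card_nsmul Sᶜ δ (δ i₀) this
        _ = ((K:ℝ) - k) * δ i₀ := by
            rw [hc, nsmul_eq_mul, Nat.cast_sub hkK]
    have hsplit : ∑ i, δ i = (∑ i ∈ S, δ i) + ∑ i ∈ Sᶜ, δ i := by
      rw [Finset.sum_add_sum_compl]
    have hKk : (0:ℝ) ≤ (K:ℝ) - k := by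
      have : (k:ℝ) ≤ K := by exact_mod_cast hkK
      linarith
    nlinarith [mul_le_mul_of_nonneg_left h2 (le_of_lt hkR),
               mul_le_mul_of_nonneg_left h1 hKk]
  constructor
  · have : ∫ ω, (1 / (K : ℝ)) * ∑ i, δ' i ω ∂μ
        = (1 / (K:ℝ)) * ((∑ i, (δ i + 1)) - p * ∑ i ∈ S, δ i) := by
      rw [integral_const_mul, hsum]
    rw [this]
    have hsum1 : ∑ i, (δ i + 1) = (∑ i, δ i) + K := by
      rw [Finset.sum_add_distrib]; simp
    rw [hsum1]
    have hK2 : (K:ℝ) ≠ 0 := ne_of_gt hKR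
    have h := mul_le_mul_of_nonneg_left hkey (le_of_lt hp0)
    have h3 : (p * k / K) * ∑ i, δ i ≤ p * ∑ i ∈ S, δ i := by
      rw [div_mul_eq_mul_div, div_le_iff₀ hKR]
      nlinarith [h]
    have hrhs : (1 - p * (k:ℝ) / (K:ℝ)) * ((1 / (K:ℝ)) * ∑ i, δ i) + 1
        = (1 / (K:ℝ)) * (((∑ i, δ i) + K) - (p * k / K) * ∑ i, δ i) := by
      field_simp
      ring
    rw [hrhs]
    apply mul_le_mul_of_nonneg_left _ (by positivity)
    linarith [h3]
  · have : 0 < p * k / K := by positivity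
    linarith
end
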